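/- Let H, ρ, F be as in the twist map setting. Let g : ℝ → ℝ be continuous with g(x + 1) = g(x), whose graph is invariant under F (F maps the graph bijectively onto itself). Assume: (1) there is τ > 0 such that π₁F(x, r₂) - π₁F(x, r₁) ≥ τ(r₂ - r₁) whenever r₁ ≤ r₂; (2) there is c ∈ (0, 1] such that π₁F(y, g(y)) - π₁F(x, g(x)) ≥ c(y - x) whenever x ≤ y; (3) there exist integers p and q ≥ 1 such that π₁(F^q(x, g(x))) = x + p for every x ∈ ℝ. Then for every (x, r) with r ≠ g(x), one has π₁(F^q(x, r)) ≠ x + p. In other words, for each x the unique r solving π₁F^q(x, r) = x + p is r = g(x). -/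

import Mathlib

open Real

/-- Partial derivative of `H` in the first variable. -/
noncomputable def D1 (H : ℝ → ℝ → ℝ) (x x' : ℝ) : ℝ := deriv (fun t => H t x') x

/-- Partial derivative of `H` in the second variable. -/
noncomputable def D2 (H : ℝ → ℝ → ℝ) (x x' : ℝ) : ℝ := deriv (fun t => H x t) x'

/-- Mixed second partial derivative `∂₁₂H` (first in the first variable, then in the
second variable). -/
noncomputable def D12 (H : ℝ → ℝ → ℝ) (x x' : ℝ) : ℝ := deriv (fun t => D1 H x t) x'

/-- Uniqueness of `(p, q)`-loops: if the invariant graph of `g` consists of `(p, q)`-loop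
points (`π₁F^q(x, g(x)) = x + p` for all `x`), then for every `(x, r)` with `r ≠ g(x)` one
has `π₁F^q(x, r) ≠ x + p`; i.e. for each `x` the unique solution of
`π₁F^q(x, r) = x + p` is `r = g(x)`. -/
theorem stmt9 (H : ℝ → ℝ → ℝ) (ρ : ℝ) (F : ℝ × ℝ → ℝ × ℝ)
    (hH : ContDiff ℝ 2 (Function.uncurry H))
    (hper : ∀ x x', H (x + 1) (x' + 1) = H x x')
    (hρ : 0 < ρ) (htwist : ∀ x x', D12 H x x' ≤ -ρ)
    (hFbij : Function.Bijective F)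
    (hFdef : ∀ x r x' r', F (x, r) = (x', r') ↔ (r = -D1 H x x' ∧ r' = D2 H x x'))
    (g : ℝ → ℝ) (hg : Continuous g) (hgper : ∀ x, g (x + 1) = g x)
    (hinv : Set.BijOn F {p : ℝ × ℝ | p.2 = g p.1} {p : ℝ × ℝ | p.2 = g p.1})
    (τ : ℝ) (hτ : 0 < τ)
    (huniftwist : ∀ x r₁ r₂ : ℝ, r₁ ≤ r₂ → τ * (r₂ - r₁) ≤ (F (x, r₂)).1 - (F (x, r₁)).1)
    (c : ℝ) (hc0 : 0 < c) (hc1 : c ≤ 1)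
    (hexp : ∀ x y : ℝ, x ≤ y → c * (y - x) ≤ (F (y, g y)).1 - (F (x, g x)).1)
    (p : ℤ) (q : ℕ) (hq : 1 ≤ q)
    (hloop : ∀ x : ℝ, (F^[q] (x, g x)).1 = x + p) :
    ∀ x r : ℝ, r ≠ g x → (F^[q] (x, r)).1 ≠ x + p := by
  have hφ : Differentiable ℝ (Function.uncurry H) := hH.differentiable (by norm_num)
  have hΨ : Differentiable ℝ (fderiv ℝ (Function.uncurry H)) :=
    (hH.fderiv_right (m := 1) (by norm_num)).differentiable (by norm_num)
  have hD1 : ∀ a b : ℝ, HasDerivAt (fun t => H t b)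
      (fderiv ℝ (Function.uncurry H) (a, b) (1, 0)) a := by
    intro a b
    have hcurve : HasDerivAt (fun t : ℝ => (t, b)) ((1 : ℝ), (0 : ℝ)) a :=
      HasDerivAt.prodMk (hasDerivAt_id a) (hasDerivAt_const a b)
    exact (hφ (a, b)).hasFDerivAt.comp_hasDerivAt a hcurve
  have hD2 : ∀ a b : ℝ, HasDerivAt (fun t => H a t)
      (fderiv ℝ (Function.uncurry H) (a, b) (0, 1)) b := by
    intro a b
    have hcurve : HasDerivAt (fun t : ℝ => (a, t)) ((0 : ℝ), (1 : ℝ)) b :=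
      HasDerivAt.prodMk (hasDerivAt_const b a) (hasDerivAt_id b)
    exact (hφ (a, b)).hasFDerivAt.comp_hasDerivAt b hcurve
  -- strict antitonicity of t ↦ D2 H t b
  have hD2anti : ∀ b : ℝ, StrictAnti fun t => D2 H t b := by
    intro b
    have hd : ∀ a : ℝ, HasDerivAt (fun t => D2 H t b) (D12 H a b) a := by
      intro a
      have hcurve : HasDerivAt (fun t : ℝ => (t, b)) ((1 : ℝ), (0 : ℝ)) a :=
        HasDerivAt.prodMk (hasDerivAt_id a) (hasDerivAt_const a b)
      have h1 : HasDerivAt (fun t : ℝ => fderiv ℝ (Function.uncurry H) (t, b))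
          (fderiv ℝ (fderiv ℝ (Function.uncurry H)) (a, b) (1, 0)) a :=
        (hΨ (a, b)).hasFDerivAt.comp_hasDerivAt a hcurve
      have h2 : HasDerivAt (fun t : ℝ => fderiv ℝ (Function.uncurry H) (t, b) ((0:ℝ), (1:ℝ)))
          (fderiv ℝ (fderiv ℝ (Function.uncurry H)) (a, b) (1, 0) (0, 1)) a := by
        simpa using h1.clm_apply (hasDerivAt_const a ((0:ℝ), (1:ℝ)))
      have hfun : (fun t => D2 H t b)
          = fun t : ℝ => fderiv ℝ (Function.uncurry H) (t, b) ((0:ℝ), (1:ℝ)) :=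
        funext fun t => (hD2 t b).deriv
      -- compute D12 H a b
      have hcurve2 : HasDerivAt (fun t : ℝ => (a, t)) ((0 : ℝ), (1 : ℝ)) b :=
        HasDerivAt.prodMk (hasDerivAt_const b a) (hasDerivAt_id b)
      have h3 : HasDerivAt (fun t : ℝ => fderiv ℝ (Function.uncurry H) (a, t))
          (fderiv ℝ (fderiv ℝ (Function.uncurry H)) (a, b) (0, 1)) b :=
        (hΨ (a, b)).hasFDerivAt.comp_hasDerivAt b hcurve2
      have h4 : HasDerivAt (fun t : ℝ => fderiv ℝ (Function.uncurry H) (a, t) ((1:ℝ), (0:ℝ)))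
          (fderiv ℝ (fderiv ℝ (Function.uncurry H)) (a, b) (0, 1) (1, 0)) b := by
        simpa using h3.clm_apply (hasDerivAt_const b ((1:ℝ), (0:ℝ)))
      have hfun2 : (fun t => D1 H a t)
          = fun t : ℝ => fderiv ℝ (Function.uncurry H) (a, t) ((1:ℝ), (0:ℝ)) :=
        funext fun t => (hD1 a t).deriv
      have h5 : D12 H a b = fderiv ℝ (fderiv ℝ (Function.uncurry H)) (a, b) (0, 1) (1, 0) := by
        rw [D12, hfun2]; exact h4.deriv
      have hsym : fderiv ℝ (fderiv ℝ (Function.uncurry H)) (a, b) ((1:ℝ), (0:ℝ)) ((0:ℝ), (1:ℝ))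
          = fderiv ℝ (fderiv ℝ (Function.uncurry H)) (a, b) ((0:ℝ), (1:ℝ)) ((1:ℝ), (0:ℝ)) :=
        (hH.contDiffAt.isSymmSndFDerivAt (by norm_num)) _ _
      rw [hfun, h5, ← hsym]
      exact h2
    exact strictAnti_of_deriv_neg fun a => by
      rw [(hd a).deriv]; exact lt_of_le_of_lt (htwist a b) (by linarith)
  -- the graph dynamics
  set f : ℝ → ℝ := fun a => (F (a, g a)).1 with hfdef
  have hmapsTo : ∀ a : ℝ, (F (a, g a)).2 = g ((F (a, g a)).1) := fun a =>
    hinv.mapsTo (show ((a, g a) : ℝ × ℝ) ∈ {p : ℝ × ℝ | p.2 = g p.1} from rfl)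
  have hFeq : ∀ a b : ℝ, b = -D1 H a (F (a, b)).1 ∧ (F (a, b)).2 = D2 H a (F (a, b)).1 :=
    fun a b => (hFdef a b (F (a, b)).1 (F (a, b)).2).mp rfl
  have hfmono : StrictMono f := by
    intro a b hab
    have := hexp a b hab.le
    have : 0 < c * (b - a) := mul_pos hc0 (by linarith)
    dsimp [f]
    nlinarith [hexp a b hab.le]
  have hiter : ∀ (a : ℝ) (k : ℕ), F^[k] (a, g a) = (f^[k] a, g (f^[k] a)) := by
    intro a k
    induction k with
    | zero => rfl
    | succ k ih =>
      rw [Function.iterate_succ_apply', Function.iterate_succ_apply', ih]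
      exact Prod.ext rfl (hmapsTo (f^[k] a))
  have hfq : ∀ a : ℝ, f^[q] a = a + p := by
    intro a
    have := hloop a
    rw [hiter a q] at this
    exact this
  have hfsurj : Function.Surjective f := by
    intro z
    obtain ⟨m, rfl⟩ := Nat.exists_eq_add_of_le hq
    refine ⟨f^[m] (z - p), ?_⟩
    have := hfq (z - p)
    rw [show 1 + m = m + 1 from by ring, Function.iterate_succ_apply'] at this
    linarith
  -- key step lemmas
  have hstep : ∀ a b : ℝ, g a < b → f a < (F (a, b)).1 ∧ g ((F (a, b)).1) < (F (a, b)).2 := by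
    intro a b hgb
    have h1 := huniftwist a (g a) b hgb.le
    have hfirst : f a < (F (a, b)).1 := by
      have : 0 < τ * (b - g a) := mul_pos hτ (by linarith)
      dsimp [f]; linarith
    obtain ⟨u, hu⟩ := hfsurj (F (a, b)).1
    have hua : a < u := hfmono.lt_iff_lt.mp (by rw [hu]; exact hfirst)
    have hga1 : g ((F (a, b)).1) = D2 H u ((F (a, b)).1) := by
      have h2 := (hFeq u (g u)).2
      rw [hmapsTo u] at h2
      rw [← hu]
      exact h2
    refine ⟨hfirst, ?_⟩
    rw [hga1, (hFeq a b).2]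
    exact hD2anti (F (a, b)).1 hua
  have hstep' : ∀ a b : ℝ, b < g a → (F (a, b)).1 < f a ∧ (F (a, b)).2 < g ((F (a, b)).1) := by
    intro a b hgb
    have h1 := huniftwist a b (g a) hgb.le
    have hfirst : (F (a, b)).1 < f a := by
      have : 0 < τ * (g a - b) := mul_pos hτ (by linarith)
      dsimp [f]; linarith
    obtain ⟨u, hu⟩ := hfsurj (F (a, b)).1
    have hua : u < a := hfmono.lt_iff_lt.mp (by rw [hu]; exact hfirst)
    have hga1 : g ((F (a, b)).1) = D2 H u ((F (a, b)).1) := by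
      have h2 := (hFeq u (g u)).2
      rw [hmapsTo u] at h2
      rw [← hu]
      exact h2
    refine ⟨hfirst, ?_⟩
    rw [hga1, (hFeq a b).2]
    exact hD2anti (F (a, b)).1 hua
  -- main argument
  intro x r hr
  rcases hr.lt_or_gt with hlt | hlt
  · -- r < g x : orbit stays strictly below
    have hP : ∀ k : ℕ, (F^[k] (x, r)).1 ≤ f^[k] x ∧ (F^[k] (x, r)).2 < g ((F^[k] (x, r)).1) := by
      intro k
      induction k with
      | zero => exact ⟨le_refl x, hlt⟩
      | succ k ih =>
        obtain ⟨ih1, ih2⟩ := ih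
        have hk := hstep' (F^[k] (x, r)).1 (F^[k] (x, r)).2 ih2
        rw [Function.iterate_succ_apply', Function.iterate_succ_apply']
        constructor
        · exact le_of_lt (lt_of_lt_of_le hk.1 (hfmono.monotone ih1))
        · exact hk.2
    obtain ⟨m, hm⟩ := Nat.exists_eq_add_of_le hq
    obtain ⟨ih1, ih2⟩ := hP m
    have hk := hstep' (F^[m] (x, r)).1 (F^[m] (x, r)).2 ih2
    have hfin : (F^[q] (x, r)).1 < f^[q] x := by
      rw [hm, show 1 + m = m + 1 from by ring, Function.iterate_succ_apply',
        Function.iterate_succ_apply']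
      exact lt_of_lt_of_le hk.1 (hfmono.monotone ih1)
    rw [hfq x] at hfin
    exact ne_of_lt hfin
  · -- g x < r : orbit stays strictly above
    have hP : ∀ k : ℕ, f^[k] x ≤ (F^[k] (x, r)).1 ∧ g ((F^[k] (x, r)).1) < (F^[k] (x, r)).2 := by
      intro k
      induction k with
      | zero => exact ⟨le_refl x, hlt⟩
      | succ k ih =>
        obtain ⟨ih1, ih2⟩ := ih
        have hk := hstep (F^[k] (x, r)).1 (F^[k] (x, r)).2 ih2
        rw [Function.iterate_succ_apply', Function.iterate_succ_apply']
        constructor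
        · exact le_of_lt (lt_of_le_of_lt (hfmono.monotone ih1) hk.1)
        · exact hk.2
    obtain ⟨m, hm⟩ := Nat.exists_eq_add_of_le hq
    obtain ⟨ih1, ih2⟩ := hP m
    have hk := hstep (F^[m] (x, r)).1 (F^[m] (x, r)).2 ih2
    have hfin : f^[q] x < (F^[q] (x, r)).1 := by
      rw [hm, show 1 + m = m + 1 from by ring, Function.iterate_succ_apply',
        Function.iterate_succ_apply']
      exact lt_of_le_of_lt (hfmono.monotone ih1) hk.1
    rw [hfq x] at hfin
    exact ne_of_gt hfin
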